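/- The sequences a_k = ∑_{n=0}^∞ C(2(n+k), n) 6^{-2(n+k)} and b_k = ∑_{n=0}^∞ C(2(n+k)+1, n) 6^{-2(n+k)-1}, k ≥ 0, satisfy the recurrences a_{k+1} = 6 b_k - a_k and b_k = 6 a_k - b_{k-1}. -/

import Mathlib

/-- `a_k = ∑_{n=0}^∞ C(2(n+k), n) 6^{-2(n+k)}`. -/
noncomputable def seqA (k : ℕ) : ℝ :=
  ∑' n : ℕ, (Nat.choose (2 * (n + k)) n : ℝ) / 6 ^ (2 * (n + k))

/-- `b_k = ∑_{n=0}^∞ C(2(n+k)+1, n) 6^{-2(n+k)-1}`. -/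
noncomputable def seqB (k : ℕ) : ℝ :=
  ∑' n : ℕ, (Nat.choose (2 * (n + k) + 1) n : ℝ) / 6 ^ (2 * (n + k) + 1)

lemma choose_le_two_pow' (n k : ℕ) : Nat.choose n k ≤ 2 ^ n := by
  rcases le_or_gt k n with h | h
  · calc Nat.choose n k ≤ ∑ i ∈ Finset.range (n + 1), Nat.choose n i :=
        Finset.single_le_sum (fun _ _ => Nat.zero_le _)
          (Finset.mem_range.2 (Nat.lt_succ_of_le h))
    _ = 2 ^ n := Nat.sum_range_choose n
  · rw [Nat.choose_eq_zero_of_lt h]; exact Nat.zero_le _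

lemma summable_aux (m c : ℕ) :
    Summable (fun n : ℕ => (Nat.choose (2 * n + m) n : ℝ) / 6 ^ (2 * n + c)) := by
  have hg : Summable (fun n : ℕ => (2 : ℝ) ^ m / 6 ^ c * (1 / 9) ^ n) :=
    (summable_geometric_of_lt_one (by norm_num) (by norm_num)).mul_left _
  refine Summable.of_nonneg_of_le (fun n => by positivity) (fun n => ?_) hg
  have h1 : (Nat.choose (2 * n + m) n : ℝ) ≤ 2 ^ (2 * n + m) := by
    exact_mod_cast choose_le_two_pow' (2 * n + m) n
  have h2 : (2 : ℝ) ^ (2 * n + m) / 6 ^ (2 * n + c) = 2 ^ m / 6 ^ c * (1 / 9) ^ n := by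
    rw [pow_add, pow_add, pow_mul, pow_mul]
    field_simp
    rw [show ((6:ℝ)^2) = 2^2 * 9 by norm_num, mul_pow]
    ring_nf
    rw [mul_assoc, mul_comm ((4:ℝ)^n), ← mul_assoc, ← mul_pow]
    norm_num
  calc (Nat.choose (2 * n + m) n : ℝ) / 6 ^ (2 * n + c)
      ≤ 2 ^ (2 * n + m) / 6 ^ (2 * n + c) := by
        apply div_le_div_of_nonneg_right h1 (by positivity) |>.trans_eq rfl
    _ = 2 ^ m / 6 ^ c * (1 / 9) ^ n := h2

lemma summable_shape (a b : ℕ → ℕ) (m c : ℕ) (ha : ∀ n, a n = 2 * n + m)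
    (hb : ∀ n, b n = 2 * n + c) :
    Summable (fun n : ℕ => (Nat.choose (a n) n : ℝ) / 6 ^ (b n)) := by
  refine (summable_aux m c).congr fun n => ?_
  rw [ha, hb]

lemma six_seqB (k : ℕ) : 6 * seqB k = seqA (k + 1) + seqA k := by
  set A : ℕ → ℝ := fun n => (Nat.choose (2 * (n + k)) n : ℝ) / 6 ^ (2 * (n + k)) with hAdef
  set A1 : ℕ → ℝ := fun n =>
    (Nat.choose (2 * (n + (k + 1))) n : ℝ) / 6 ^ (2 * (n + (k + 1))) with hA1def
  set F : ℕ → ℝ := fun n =>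
    (Nat.choose (2 * (n + k) + 1) n : ℝ) / 6 ^ (2 * (n + k)) with hFdef
  have hA : Summable A := summable_shape _ _ (2 * k) (2 * k) (fun n => by ring) (fun n => by ring)
  have hA1 : Summable A1 :=
    summable_shape _ _ (2 * (k + 1)) (2 * (k + 1)) (fun n => by ring) (fun n => by ring)
  have hF : Summable F :=
    summable_shape _ _ (2 * k + 1) (2 * k) (fun n => by ring) (fun n => by ring)
  have hAt : Summable (fun n => A (n + 1)) := (summable_nat_add_iff 1).2 hA
  have h6 : 6 * seqB k = ∑' n, F n := by
    rw [seqB, ← tsum_mul_left]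
    refine tsum_congr fun n => ?_
    rw [hFdef]
    simp only [pow_succ]
    field_simp
  have hPascal : ∀ n, F (n + 1) = A1 n + A (n + 1) := by
    intro n
    have harg : 2 * (n + 1 + k) + 1 = (2 * (n + (k + 1))) + 1 := by ring
    have harg2 : 2 * (n + 1 + k) = 2 * (n + (k + 1)) := by ring
    simp only [hFdef, hA1def, hAdef, harg, harg2]
    rw [Nat.choose_succ_succ]
    push_cast
    rw [add_div]
  have hsplit : ∑' n, F (n + 1) = seqA (k + 1) + ∑' n, A (n + 1) := by
    rw [tsum_congr hPascal, hA1.tsum_add hAt, seqA]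
  have hAsum : seqA k = A 0 + ∑' n, A (n + 1) := hA.tsum_eq_zero_add
  have hF0 : F 0 = A 0 := by simp [hFdef, hAdef]
  rw [h6, hF.tsum_eq_zero_add, hsplit, hF0]
  rw [hAsum]
  ring

lemma six_seqA (k : ℕ) : 6 * seqA (k + 1) = seqB (k + 1) + seqB k := by
  set B : ℕ → ℝ := fun n =>
    (Nat.choose (2 * (n + k) + 1) n : ℝ) / 6 ^ (2 * (n + k) + 1) with hBdef
  set B1 : ℕ → ℝ := fun n =>
    (Nat.choose (2 * (n + (k + 1)) + 1) n : ℝ) / 6 ^ (2 * (n + (k + 1)) + 1) with hB1def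
  set F : ℕ → ℝ := fun n =>
    (Nat.choose (2 * (n + k) + 2) n : ℝ) / 6 ^ (2 * (n + k) + 1) with hFdef
  have hB : Summable B :=
    summable_shape _ _ (2 * k + 1) (2 * k + 1) (fun n => by ring) (fun n => by ring)
  have hB1 : Summable B1 :=
    summable_shape _ _ (2 * k + 3) (2 * k + 3) (fun n => by ring) (fun n => by ring)
  have hF : Summable F :=
    summable_shape _ _ (2 * k + 2) (2 * k + 1) (fun n => by ring) (fun n => by ring)
  have hBt : Summable (fun n => B (n + 1)) := (summable_nat_add_iff 1).2 hB
  have h6 : 6 * seqA (k + 1) = ∑' n, F n := by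
    rw [seqA, ← tsum_mul_left]
    refine tsum_congr fun n => ?_
    rw [hFdef]
    have harg : 2 * (n + (k + 1)) = (2 * (n + k) + 1) + 1 := by ring
    rw [harg]
    simp only [pow_succ]
    field_simp
  have hPascal : ∀ n, F (n + 1) = B1 n + B (n + 1) := by
    intro n
    have harg : 2 * (n + 1 + k) + 2 = (2 * (n + (k + 1)) + 1) + 1 := by ring
    have harg2 : 2 * (n + 1 + k) + 1 = 2 * (n + (k + 1)) + 1 := by ring
    simp only [hFdef, hB1def, hBdef, harg, harg2]
    rw [Nat.choose_succ_succ]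
    push_cast
    rw [add_div]
  have hsplit : ∑' n, F (n + 1) = seqB (k + 1) + ∑' n, B (n + 1) := by
    rw [tsum_congr hPascal, hB1.tsum_add hBt, seqB]
  have hBsum : seqB k = B 0 + ∑' n, B (n + 1) := hB.tsum_eq_zero_add
  have hF0 : F 0 = B 0 := by simp [hFdef, hBdef]
  rw [h6, hF.tsum_eq_zero_add, hsplit, hF0, hBsum]
  ring

/-- The recurrences `a_{k+1} = 6 b_k - a_k` and `b_k = 6 a_k - b_{k-1}`. -/
theorem seqA_seqB_recurrence :
    (∀ k : ℕ, seqA (k + 1) = 6 * seqB k - seqA k) ∧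
    (∀ k : ℕ, seqB (k + 1) = 6 * seqA (k + 1) - seqB k) := by
  constructor
  · intro k
    have := six_seqB k
    linarith
  · intro k
    have := six_seqA k
    linarith
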